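/- Suppose G(V,E) satisfies the sufficient condition for parameter f, and let F be the set of faulty nodes with |F| ≤ f. Consider an execution of the Middle algorithm, a fault-free node i ∈ V∖F, an iteration t ≥ 1 with middle set M at node i, and a real ψ with ψ ≤ μ[t−1]. Then for every j ∈ {i} ∪ M, v_i[t] − ψ ≥ a_i·(w_j[t,i] − ψ), where we set w_i[t,i] := v_i[t−1]. In particular, for every fault-free j ∈ {i} ∪ M, v_i[t] − ψ ≥ a_i·(v_j[t−1] − ψ). -/

import Mathlib

open Finset Filter

variable {V : Type} [Fintype V] [DecidableEq V]

/-- Incoming neighbors of node `v` in the directed graph with edge set `E`. -/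
def NinSet (E : Finset (V × V)) (v : V) : Finset V :=
  Finset.univ.filter (fun u => (u, v) ∈ E)

/-- `A ⇒ B`: there is a node in `B` with more than 1/3 of its incoming neighbors in `A`. -/
def ImpRel (E : Finset (V × V)) (A B : Finset V) : Prop :=
  ∃ v ∈ B, (NinSet E v).card < 3 * ((NinSet E v) ∩ A).card

/-- `in(A ⇒ B)`: the set of nodes in `B` with more than 1/3 of incoming neighbors in `A`. -/
def inRel (E : Finset (V × V)) (A B : Finset V) : Finset V :=
  B.filter (fun v => (NinSet E v).card < 3 * ((NinSet E v) ∩ A).card)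

/-- `A` propagates to `B` in `l` steps. -/
def PropagatesIn (E : Finset (V × V)) (A B : Finset V) (l : ℕ) : Prop :=
  0 < l ∧ ∃ As Bs : ℕ → Finset V,
    As 0 = A ∧ Bs 0 = B ∧ As l = A ∪ B ∧ Bs l = ∅ ∧
    (∀ τ < l, Bs τ ≠ ∅) ∧
    (∀ τ < l, ImpRel E (As τ) (Bs τ) ∧
      As (τ + 1) = As τ ∪ inRel E (As τ) (Bs τ) ∧
      Bs (τ + 1) = Bs τ \ inRel E (As τ) (Bs τ))

/-- `A` propagates to `B` (in some number of steps). -/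
def Propagates (E : Finset (V × V)) (A B : Finset V) : Prop :=
  ∃ l, PropagatesIn E A B l

/-- The sufficient condition for parameter `f`. -/
def SuffCond (E : Finset (V × V)) (f : ℕ) : Prop :=
  (∀ v : V, 3 * f ≤ (NinSet E v).card) ∧
  (∀ F L C R : Finset V,
    F ∪ L ∪ C ∪ R = Finset.univ →
    Disjoint F L → Disjoint F C → Disjoint F R →
    Disjoint L C → Disjoint L R → Disjoint C R →
    L.Nonempty → R.Nonempty → F.card ≤ f →
    ImpRel E (C ∪ R) L ∨ ImpRel E (L ∪ C) R)

/-- The weight `a_i = 1/(|N_i^-| - 2⌊|N_i^-|/3⌋ + 1)` used in the Middle algorithm. -/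
noncomputable def middleWeight (E : Finset (V × V)) (i : V) : ℝ :=
  (((NinSet E i).card - 2 * ((NinSet E i).card / 3) + 1 : ℕ) : ℝ)⁻¹

/-- `α = min_{i ∈ V} a_i`. -/
noncomputable def alphaMin (E : Finset (V × V)) : ℝ :=
  ⨅ i : V, middleWeight E i

/-- An execution of the Middle algorithm on graph `E` with faulty set `F`. -/
structure MiddleExec (E : Finset (V × V)) (F : Finset V) where
  /-- `state i t` is the state `v_i[t]` (meaningful for fault-free `i`). -/
  state : V → ℕ → ℝ
  /-- `w t i j` is the value node `i` receives from `j ∈ N_i^-` in iteration `t ≥ 1`. -/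
  w : ℕ → V → V → ℝ
  /-- the set `B` at node `i` in iteration `t`. -/
  Bs : ℕ → V → Finset V
  /-- the set `T` at node `i` in iteration `t`. -/
  Ts : ℕ → V → Finset V
  /-- the set `M` at node `i` in iteration `t`. -/
  Ms : ℕ → V → Finset V
  w_honest : ∀ t, 1 ≤ t → ∀ i, i ∉ F → ∀ j ∈ NinSet E i, j ∉ F →
    w t i j = state j (t - 1)
  part_union : ∀ t, 1 ≤ t → ∀ i, i ∉ F → Bs t i ∪ Ts t i ∪ Ms t i = NinSet E i
  disj_BT : ∀ t, 1 ≤ t → ∀ i, i ∉ F → Disjoint (Bs t i) (Ts t i)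
  disj_BM : ∀ t, 1 ≤ t → ∀ i, i ∉ F → Disjoint (Bs t i) (Ms t i)
  disj_TM : ∀ t, 1 ≤ t → ∀ i, i ∉ F → Disjoint (Ts t i) (Ms t i)
  card_B : ∀ t, 1 ≤ t → ∀ i, i ∉ F → (Bs t i).card = (NinSet E i).card / 3
  card_T : ∀ t, 1 ≤ t → ∀ i, i ∉ F → (Ts t i).card = (NinSet E i).card / 3
  le_BM : ∀ t, 1 ≤ t → ∀ i, i ∉ F → ∀ j ∈ Bs t i, ∀ k ∈ Ms t i, w t i j ≤ w t i k
  le_MT : ∀ t, 1 ≤ t → ∀ i, i ∉ F → ∀ j ∈ Ms t i, ∀ k ∈ Ts t i, w t i j ≤ w t i k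
  update : ∀ t, 1 ≤ t → ∀ i, i ∉ F →
    state i t = middleWeight E i * (state i (t - 1) + ∑ j ∈ Ms t i, w t i j)

/-- `U[t]`: the maximum state among fault-free nodes at the end of iteration `t`. -/
noncomputable def Umax {E : Finset (V × V)} {F : Finset V}
    (exec : MiddleExec E F) (t : ℕ) : ℝ :=
  ⨆ i : {i : V // i ∉ F}, exec.state i.1 t

/-- `μ[t]`: the minimum state among fault-free nodes at the end of iteration `t`. -/
noncomputable def muMin {E : Finset (V × V)} {F : Finset V}
    (exec : MiddleExec E F) (t : ℕ) : ℝ :=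
  ⨅ i : {i : V // i ∉ F}, exec.state i.1 t

/-- lower-bound lemma on `v_i[t] - ψ`. -/
theorem lower_bound_lemma
    (E : Finset (V × V)) (f : ℕ)
    (hn : 2 ≤ Fintype.card V)
    (hloop : ∀ v : V, (v, v) ∉ E)
    (hsuff : SuffCond E f)
    (F : Finset V) (hF : F.card ≤ f)
    (exec : MiddleExec E F)
    (i : V) (hi : i ∉ F)
    (t : ℕ) (ht : 1 ≤ t)
    (ψ : ℝ) (hψ : ψ ≤ muMin exec (t - 1)) :
    (∀ j ∈ insert i (exec.Ms t i),
      exec.state i t - ψ ≥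
        middleWeight E i * ((if j = i then exec.state i (t - 1) else exec.w t i j) - ψ)) ∧
    (∀ j ∈ insert i (exec.Ms t i), j ∉ F →
      exec.state i t - ψ ≥ middleWeight E i * (exec.state j (t - 1) - ψ)) := by
  have hmu : ∀ k, k ∉ F → ψ ≤ exec.state k (t - 1) := by
    intro k hk
    refine hψ.trans ?_
    exact ciInf_le (Finite.bddBelow_range _) (⟨k, hk⟩ : {i : V // i ∉ F})
  have hMsub : exec.Ms t i ⊆ NinSet E i := by
    intro j hj
    rw [← exec.part_union t ht i hi]
    exact Finset.mem_union_right _ hj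
  have hBsub : exec.Bs t i ⊆ NinSet E i := by
    intro j hj
    rw [← exec.part_union t ht i hi]
    exact Finset.mem_union_left _ (Finset.mem_union_left _ hj)
  -- every middle value is at least ψ
  have key : ∀ j ∈ exec.Ms t i, ψ ≤ exec.w t i j := by
    intro j hj
    have hjB : j ∉ exec.Bs t i := by
      intro h
      exact (Finset.disjoint_left.mp (exec.disj_BM t ht i hi) h) hj
    have hcard : f < (insert j (exec.Bs t i)).card := by
      rw [Finset.card_insert_of_notMem hjB, exec.card_B t ht i hi]
      have h3 : 3 * f ≤ (NinSet E i).card := hsuff.1 i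
      have : f ≤ (NinSet E i).card / 3 := Nat.le_div_iff_mul_le (by norm_num) |>.mpr
        (by omega)
      omega
    have : ¬ (insert j (exec.Bs t i) ⊆ F) := by
      intro hsub
      exact absurd (Finset.card_le_card hsub) (by omega)
    obtain ⟨k, hkmem, hkF⟩ := Finset.not_subset.mp this
    rcases Finset.mem_insert.mp hkmem with hk | hk
    · subst hk
      rw [exec.w_honest t ht i hi k (hMsub hj) hkF]
      exact hmu k hkF
    · have h1 : exec.w t i k ≤ exec.w t i j := exec.le_BM t ht i hi k hk j hj
      have h2 : exec.w t i k = exec.state k (t - 1) :=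
        exec.w_honest t ht i hi k (hBsub hk) hkF
      exact (h2 ▸ hmu k hkF).trans h1
  have hself : ψ ≤ exec.state i (t - 1) := hmu i hi
  -- weight positivity and the cardinality identity
  set n := (NinSet E i).card with hndef
  have hMcard : (exec.Ms t i).card = n - 2 * (n / 3) := by
    have hu := exec.part_union t ht i hi
    have hd1 : Disjoint (exec.Bs t i) (exec.Ts t i) := exec.disj_BT t ht i hi
    have hd2 : Disjoint (exec.Bs t i ∪ exec.Ts t i) (exec.Ms t i) :=
      Finset.disjoint_union_left.mpr ⟨exec.disj_BM t ht i hi, exec.disj_TM t ht i hi⟩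
    have : n = (exec.Bs t i).card + (exec.Ts t i).card + (exec.Ms t i).card := by
      rw [hndef, ← hu, Finset.card_union_of_disjoint hd2,
        Finset.card_union_of_disjoint hd1]
    have hB := exec.card_B t ht i hi
    have hT := exec.card_T t ht i hi
    have hdiv : n / 3 ≤ n := Nat.div_le_self _ _
    omega
  have hapos : (0 : ℝ) < middleWeight E i := by
    unfold middleWeight
    rw [inv_pos]
    exact_mod_cast Nat.succ_pos _
  -- main identity
  have hmw : middleWeight E i = (((exec.Ms t i).card + 1 : ℕ) : ℝ)⁻¹ := by
    unfold middleWeight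
    congr 2
    omega
  have hmw0 : (((exec.Ms t i).card + 1 : ℕ) : ℝ) ≠ 0 := by positivity
  have hsum : exec.state i t - ψ =
      middleWeight E i *
        ((exec.state i (t - 1) - ψ) + ∑ j ∈ exec.Ms t i, (exec.w t i j - ψ)) := by
    rw [exec.update t ht i hi, hmw, Finset.sum_sub_distrib, Finset.sum_const,
      nsmul_eq_mul]
    field_simp
    push_cast
    ring
  have main : ∀ j ∈ insert i (exec.Ms t i),
      exec.state i t - ψ ≥
        middleWeight E i * ((if j = i then exec.state i (t - 1) else exec.w t i j) - ψ) := by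
    intro j hj
    have hs : (0:ℝ) ≤ ∑ k ∈ exec.Ms t i, (exec.w t i k - ψ) :=
      Finset.sum_nonneg (fun k hk => sub_nonneg.mpr (key k hk))
    rcases Finset.mem_insert.mp hj with hj' | hj'
    · rw [if_pos hj', hsum]
      exact mul_le_mul_of_nonneg_left (le_add_of_nonneg_right hs) hapos.le
    · have hji : j ≠ i := by
        rintro rfl
        have hmem : j ∈ NinSet E j := hMsub hj'
        simp [NinSet] at hmem
        exact hloop j hmem
      rw [if_neg hji, hsum]
      have hs2 : exec.w t i j - ψ ≤ ∑ k ∈ exec.Ms t i, (exec.w t i k - ψ) :=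
        Finset.single_le_sum (fun k hk => sub_nonneg.mpr (key k hk)) hj'
      have hv : (0:ℝ) ≤ exec.state i (t - 1) - ψ := sub_nonneg.mpr hself
      exact mul_le_mul_of_nonneg_left (by linarith) hapos.le
  refine ⟨main, ?_⟩
  intro j hj hjF
  have h := main j hj
  rcases Finset.mem_insert.mp hj with hj' | hj'
  · rw [if_pos hj'] at h
    rw [hj']
    exact h
  · have hji : j ≠ i := by
      rintro rfl
      have hmem : j ∈ NinSet E j := hMsub hj'
      simp [NinSet] at hmem
      exact hloop j hmem
    rw [if_neg hji, exec.w_honest t ht i hi j (hMsub hj') hjF] at h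
    exact h
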